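/- (Theorem 1, high-probability trajectory error.) There exists a universal constant C > 0 with the following property. Let Θ : ℝ^d → ℝ^{d×p} be continuous with ℓ²-operator norm ‖Θ(z)‖₂ ≤ K for all z, let A ∈ ℝ^{n×p} have Gram matrix AᵀA with smallest eigenvalue at least c·n (c > 0), and let ε be a random vector in ℝⁿ with independent centered Gaussian coordinates of variance s² > 0. Let ξ̂ = (AᵀA)⁻¹Aᵀ(Aξ* + ε), let x : [0,T] → ℝ^d solve x′(t) = Θ(x(t))ξ* with x(0) = x₀, and for each sample point ω let x̂_ω : [0,T] → ℝ^d solve x̂_ω′(t) = Θ(x̂_ω(t))ξ̂(ω) with x̂_ω(0) = x₀, where almost surely the vector field z ↦ Θ(z)ξ̂(ω) is Lipschitz with constant L > 0. Then for every δ ∈ (0, 1/2], with probability at least 1 − δ, ‖x(T) − x̂(T)‖ ≤ C·(K/L)·(e^{LT} − 1)·s·√(p·log(1/δ)/(c·n)). -/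

import Mathlib

open MeasureTheory Matrix ProbabilityTheory NNReal

namespace S7

section auxiliary

open Real Set
open scoped ENNReal


lemma pdf_shift (v : ℝ≥0) (t x : ℝ) :
    Real.exp (t * x) * gaussianPDFReal 0 v x
      = Real.exp (t ^ 2 * v / 2) * gaussianPDFReal (t * v) v x := by
  by_cases hv : v = 0
  · simp [gaussianPDFReal, hv]
  · have hv' : (v : ℝ) ≠ 0 := by exact_mod_cast hv
    unfold gaussianPDFReal
    rw [sub_zero]
    rw [show Real.exp (t * x) * ((√(2 * π * v))⁻¹ * rexp (-x ^ 2 / (2 * v)))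
        = (√(2 * π * v))⁻¹ * (rexp (t * x) * rexp (-x ^ 2 / (2 * v))) by ring,
      show rexp (t ^ 2 * v / 2) * ((√(2 * π * v))⁻¹ * rexp (-(x - t * v) ^ 2 / (2 * v)))
        = (√(2 * π * v))⁻¹ * (rexp (t ^ 2 * v / 2) * rexp (-(x - t * v) ^ 2 / (2 * v))) by ring,
      ← Real.exp_add, ← Real.exp_add]
    congr 1
    field_simp
    ring

lemma integral_exp_gaussianReal (v : ℝ≥0) (t : ℝ) :
    ∫ x, Real.exp (t * x) ∂(gaussianReal 0 v) = Real.exp (t ^ 2 * v / 2) := by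
  by_cases hv : v = 0
  · rw [hv, gaussianReal_zero_var, integral_dirac]
    simp
  · rw [gaussianReal_of_var_ne_zero 0 hv]
    have hmeas : Measurable fun x => (gaussianPDFReal 0 v x).toNNReal :=
      (measurable_gaussianPDFReal 0 v).real_toNNReal
    have hd : (gaussianPDF 0 v) = fun x => ((gaussianPDFReal 0 v x).toNNReal : ℝ≥0∞) := rfl
    rw [hd, integral_withDensity_eq_integral_smul hmeas]
    have : ∀ x, ((gaussianPDFReal 0 v x).toNNReal : ℝ) • Real.exp (t * x)
        = Real.exp (t ^ 2 * v / 2) * gaussianPDFReal (t * v) v x := by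
      intro x
      rw [smul_eq_mul, Real.coe_toNNReal _ (gaussianPDFReal_nonneg 0 v x), mul_comm, pdf_shift]
    simp_rw [NNReal.smul_def, this]
    rw [integral_const_mul, integral_gaussianPDFReal_eq_one (t * v) hv, mul_one]

lemma integrable_exp_gaussianReal (v : ℝ≥0) (t : ℝ) :
    Integrable (fun x => Real.exp (t * x)) (gaussianReal 0 v) := by
  by_cases hv : v = 0
  · rw [hv, gaussianReal_zero_var]
    refine ⟨(by fun_prop : Measurable fun x => Real.exp (t * x)).aestronglyMeasurable, ?_⟩
    rw [HasFiniteIntegral, lintegral_dirac]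
    exact ENNReal.coe_lt_top
  · rw [gaussianReal_of_var_ne_zero 0 hv]
    have hmeas : Measurable fun x => (gaussianPDFReal 0 v x).toNNReal :=
      (measurable_gaussianPDFReal 0 v).real_toNNReal
    have hd : (gaussianPDF 0 v) = fun x => ((gaussianPDFReal 0 v x).toNNReal : ℝ≥0∞) := rfl
    rw [hd, integrable_withDensity_iff_integrable_smul hmeas]
    have : (fun x => ((gaussianPDFReal 0 v x).toNNReal : ℝ≥0) • Real.exp (t * x))
        = fun x => Real.exp (t ^ 2 * v / 2) * gaussianPDFReal (t * v) v x := by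
      funext x
      rw [NNReal.smul_def, smul_eq_mul, Real.coe_toNNReal _ (gaussianPDFReal_nonneg 0 v x),
        mul_comm, pdf_shift]
    rw [this]
    exact (integrable_gaussianPDFReal (t * v) v).const_mul _






variable {Ω : Type} [MeasurableSpace Ω] {μ : Measure Ω}

lemma integrable_exp_of_gaussian {X : Ω → ℝ} (hX : Measurable X) {v : ℝ≥0}
    (h : Measure.map X μ = gaussianReal 0 v) (t : ℝ) :
    Integrable (fun ω => Real.exp (t * X ω)) μ := by
  have h1 : Integrable (fun x => Real.exp (t * x)) (Measure.map X μ) :=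
    h ▸ integrable_exp_gaussianReal v t
  have hf : AEStronglyMeasurable (fun x : ℝ => Real.exp (t * x)) (Measure.map X μ) :=
    (Real.measurable_exp.comp (measurable_const.mul measurable_id)).aestronglyMeasurable
  exact (integrable_map_measure hf hX.aemeasurable).mp h1

lemma mgf_of_gaussian {X : Ω → ℝ} (hX : Measurable X) {v : ℝ≥0}
    (h : Measure.map X μ = gaussianReal 0 v) (t : ℝ) :
    mgf X μ t = Real.exp (t ^ 2 * v / 2) := by
  have hf : AEStronglyMeasurable (fun x : ℝ => Real.exp (t * x)) (Measure.map X μ) :=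
    (Real.measurable_exp.comp (measurable_const.mul measurable_id)).aestronglyMeasurable
  rw [mgf, ← integral_map hX.aemeasurable hf, h, integral_exp_gaussianReal]

lemma tail_weighted_sum [IsProbabilityMeasure μ]
    {n : ℕ} {ε : Ω → Fin n → ℝ} (hmeas : ∀ i, Measurable fun ω => ε ω i)
    {v : ℝ≥0} (hmap : ∀ i, Measure.map (fun ω => ε ω i) μ = gaussianReal 0 v)
    (hindep : iIndepFun (fun i ω => ε ω i) μ)
    (m : Fin n → ℝ) {V : ℝ} (hV : 0 < V) (hm : (∑ i, m i ^ 2) * (v : ℝ) ≤ V)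
    {u : ℝ} (hu : 0 ≤ u) :
    μ {ω | u ≤ ∑ i, m i * ε ω i} ≤ ENNReal.ofReal (Real.exp (-u ^ 2 / (2 * V))) := by
  set Xf : Fin n → Ω → ℝ := fun i ω => m i * ε ω i with hXf
  have hXfmeas : ∀ i, Measurable (Xf i) := fun i => (hmeas i).const_mul _
  have hindep' : iIndepFun Xf μ := by
    have := iIndepFun.comp hindep (fun i (y : ℝ) => m i * y) (fun i => by fun_prop)
    exact this
  set t : ℝ := u / V with ht
  have htnn : 0 ≤ t := div_nonneg hu hV.le
  have hint : ∀ i, Integrable (fun ω => Real.exp (t * Xf i ω)) μ := by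
    intro i
    have := integrable_exp_of_gaussian (hmeas i) (hmap i) (t * m i)
    refine this.congr ?_
    filter_upwards with ω
    rw [hXf]
    ring_nf
  have hmgf : ∀ i, mgf (Xf i) μ t = Real.exp ((t * m i) ^ 2 * v / 2) := by
    intro i
    have := mgf_of_gaussian (hmeas i) (hmap i) (t * m i)
    rw [← this, mgf, mgf]
    congr 1
    funext ω
    rw [hXf]
    ring_nf
  have hS : (∑ i, Xf i) = fun ω => ∑ i, m i * ε ω i := by
    funext ω; simp [hXf]
  have hchern := measure_ge_le_exp_mul_mgf (X := ∑ i, Xf i) (μ := μ) u htnn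
    (hindep'.integrable_exp_mul_sum hXfmeas (fun i _ => hint i))
  rw [hindep'.mgf_sum hXfmeas] at hchern
  have hprod : (∏ i, mgf (Xf i) μ t) = Real.exp (t ^ 2 * ((∑ i, m i ^ 2) * v) / 2) := by
    rw [Finset.prod_congr rfl (fun i _ => hmgf i), ← Real.exp_sum]
    congr 1
    have hterm : ∀ x : Fin n, (t * m x) ^ 2 * (v : ℝ) / 2 = t ^ 2 / 2 * (v : ℝ) * m x ^ 2 :=
      fun x => by ring
    rw [Finset.sum_congr rfl fun i _ => hterm i, ← Finset.mul_sum]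
    ring
  rw [hprod] at hchern
  have hexp : Real.exp (-t * u) * Real.exp (t ^ 2 * ((∑ i, m i ^ 2) * v) / 2)
      ≤ Real.exp (-u ^ 2 / (2 * V)) := by
    rw [← Real.exp_add]
    apply Real.exp_le_exp.2
    have hsq : t ^ 2 * ((∑ i, m i ^ 2) * v) / 2 ≤ t ^ 2 * V / 2 := by
      have := sq_nonneg t
      nlinarith
    have : -t * u + t ^ 2 * V / 2 = -u ^ 2 / (2 * V) := by
      rw [ht]; field_simp; ring
    nlinarith
  have hfin : μ {ω | u ≤ (∑ i, Xf i) ω} ≠ ⊤ := measure_ne_top _ _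
  have : μ {ω | u ≤ (∑ i, Xf i) ω} ≤ ENNReal.ofReal (Real.exp (-u ^ 2 / (2 * V))) := by
    rw [← ENNReal.ofReal_toReal hfin]
    exact ENNReal.ofReal_le_ofReal (hchern.trans hexp)
  rw [hS] at this
  exact this



lemma ofReal_le_one_add_sub (x : ℝ) : ENNReal.ofReal x ≤ 1 + ENNReal.ofReal (x - 1) := by
  by_cases hx : x ≤ 1
  · exact le_add_right (ENNReal.ofReal_le_one.2 hx)
  · push_neg at hx
    have : ENNReal.ofReal x = 1 + ENNReal.ofReal (x - 1) := by
      rw [← ENNReal.ofReal_one, ← ENNReal.ofReal_add zero_le_one (by linarith : (0:ℝ) ≤ x - 1)]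
      norm_num
    exact this.le

variable {Ω : Type} [MeasurableSpace Ω] {μ : Measure Ω}

lemma lintegral_exp_sq_le [IsProbabilityMeasure μ] {S : Ω → ℝ} (hS : Measurable S)
    {V : ℝ} (hV : 0 < V)
    (htail : ∀ u : ℝ, 0 < u →
      μ {ω | u ≤ S ω ^ 2} ≤ 2 * ENNReal.ofReal (Real.exp (-u / (2 * V)))) :
    ∫⁻ ω, ENNReal.ofReal (Real.exp ((4 * V)⁻¹ * S ω ^ 2)) ∂μ ≤ 3 := by
  set r : ℝ := (4 * V)⁻¹ with hrdef
  have hr : 0 < r := by positivity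
  set f : Ω → ℝ := fun ω => S ω ^ 2 with hfdef
  have hfmeas : Measurable f := hS.pow_const 2
  have hI : ∀ y : ℝ, ∫ t in (0:ℝ)..y, r * Real.exp (r * t) = Real.exp (r * y) - 1 := by
    intro y
    have hderiv : ∀ u ∈ Set.uIcc (0:ℝ) y,
        HasDerivAt (fun z => Real.exp (r * z)) (r * Real.exp (r * u)) u := by
      intro u _
      have := ((hasDerivAt_id u).const_mul r).exp
      simpa [mul_comm] using this
    have := intervalIntegral.integral_eq_sub_of_hasDerivAt hderiv
      (Continuous.intervalIntegrable (by continuity) 0 y)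
    rw [this]
    simp
  have layer := lintegral_comp_eq_lintegral_meas_le_mul μ
    (Filter.Eventually.of_forall (fun ω => sq_nonneg (S ω)) :
      0 ≤ᵐ[μ] f)
    hfmeas.aemeasurable (g := fun u => r * Real.exp (r * u))
    (fun t _ => Continuous.intervalIntegrable (by continuity) 0 t)
    (Filter.Eventually.of_forall (fun t => by positivity))
  have hL1 : ∫⁻ ω, ENNReal.ofReal (Real.exp (r * f ω) - 1) ∂μ
      = ∫⁻ u in Ioi (0:ℝ), μ {a | u ≤ f a} * ENNReal.ofReal (r * Real.exp (r * u)) := by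
    rw [← layer]
    exact lintegral_congr fun ω => by rw [hI]
  -- bound the tail integral
  have hpt : ∀ u ∈ Ioi (0:ℝ), μ {a | u ≤ f a} * ENNReal.ofReal (r * Real.exp (r * u))
      ≤ 2 * ENNReal.ofReal (r * Real.exp (-r * u)) := by
    intro u hu
    calc μ {a | u ≤ f a} * ENNReal.ofReal (r * Real.exp (r * u))
        ≤ (2 * ENNReal.ofReal (Real.exp (-u / (2 * V)))) * ENNReal.ofReal (r * Real.exp (r * u)) :=
          mul_le_mul_left (htail u hu) _
      _ = 2 * ENNReal.ofReal (Real.exp (-u / (2 * V)) * (r * Real.exp (r * u))) := by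
          rw [mul_assoc, ← ENNReal.ofReal_mul (Real.exp_nonneg _)]
      _ = 2 * ENNReal.ofReal (r * Real.exp (-r * u)) := by
          congr 1
          rw [show Real.exp (-u / (2 * V)) * (r * Real.exp (r * u))
              = r * (Real.exp (-u / (2 * V)) * Real.exp (r * u)) by ring, ← Real.exp_add]
          congr 2
          have h4 : (4 : ℝ) * V ≠ 0 := by positivity
          have h2 : (2 : ℝ) * V ≠ 0 := by positivity
          rw [hrdef]; field_simp
          ring
  have hIoi : ∫⁻ u in Ioi (0:ℝ), 2 * ENNReal.ofReal (r * Real.exp (-r * u)) = 2 := by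
    have hInt : IntegrableOn (fun u => r * Real.exp (-r * u)) (Ioi (0:ℝ)) :=
      (exp_neg_integrableOn_Ioi 0 hr).const_mul r
    rw [lintegral_const_mul' _ _ (by norm_num : (2:ℝ≥0∞) ≠ ⊤),
      ← ofReal_integral_eq_lintegral_ofReal hInt
        (Filter.Eventually.of_forall (fun u => by positivity))]
    have hval : ∫ u in Ioi (0:ℝ), r * Real.exp (-r * u) = 1 := by
      rw [integral_const_mul]
      have := integral_comp_mul_left_Ioi (fun y => Real.exp (-y)) 0 hr
      simp only [mul_zero] at this
      rw [show (fun u => Real.exp (-r * u)) = fun u => Real.exp (-(r * u)) by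
        funext u; rw [neg_mul]]
      rw [this, integral_exp_neg_Ioi_zero, smul_eq_mul]
      field_simp
    rw [hval]
    norm_num
  calc ∫⁻ ω, ENNReal.ofReal (Real.exp (r * f ω)) ∂μ
      ≤ ∫⁻ ω, (1 + ENNReal.ofReal (Real.exp (r * f ω) - 1)) ∂μ :=
        lintegral_mono fun ω => ofReal_le_one_add_sub _
    _ = 1 + ∫⁻ ω, ENNReal.ofReal (Real.exp (r * f ω) - 1) ∂μ := by
        rw [lintegral_add_left measurable_const, lintegral_one, measure_univ]
    _ ≤ 1 + 2 := by
        gcongr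
        rw [hL1]
        exact le_trans (setLIntegral_mono (by fun_prop) hpt) (le_of_eq hIoi)
    _ = 3 := by norm_num



lemma quad_form_ge {p : ℕ} {B : Matrix (Fin p) (Fin p) ℝ} (hB : B.IsHermitian) {β : ℝ}
    (hev : ∀ i, β ≤ hB.eigenvalues i) (w : Fin p → ℝ) :
    β * (w ⬝ᵥ w) ≤ w ⬝ᵥ (B *ᵥ w) := by
  classical
  set W : EuclideanSpace ℝ (Fin p) := (WithLp.equiv 2 _).symm w with hW
  set b := hB.eigenvectorBasis with hb
  set a : Fin p → ℝ := fun i => inner ℝ (b i) W with ha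
  have hdot : ∀ x y : EuclideanSpace ℝ (Fin p),
      (inner ℝ x y : ℝ) = (WithLp.equiv 2 _ x) ⬝ᵥ (WithLp.equiv 2 _ y) := by
    intro x y
    rw [PiLp.inner_apply]
    simp [dotProduct, RCLike.inner_apply, mul_comm]
  have hTb : ∀ i, Matrix.toEuclideanLin B (b i) = hB.eigenvalues i • b i := by
    intro i
    apply (WithLp.equiv 2 _).injective
    simp only [WithLp.equiv_apply, Matrix.piLp_ofLp_toEuclideanLin]
    have := hB.mulVec_eigenvectorBasis i
    simpa [Matrix.toLin'_apply] using this
  have hsymm := (Matrix.isHermitian_iff_isSymmetric.1 hB)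
  have hWT : (inner ℝ W (Matrix.toEuclideanLin B W) : ℝ) = ∑ i, hB.eigenvalues i * a i ^ 2 := by
    rw [← b.sum_inner_mul_inner W (Matrix.toEuclideanLin B W)]
    refine Finset.sum_congr rfl fun i _ => ?_
    have h1 : (inner ℝ (b i) (Matrix.toEuclideanLin B W) : ℝ) = hB.eigenvalues i * a i := by
      rw [← hsymm (b i) W, hTb i, real_inner_smul_left, ha]
    have h2 : (inner ℝ W (b i) : ℝ) = a i := by rw [real_inner_comm, ha]
    rw [h1, h2]
    ring
  have hWW : (inner ℝ W W : ℝ) = ∑ i, a i ^ 2 := by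
    rw [← b.sum_inner_mul_inner W W]
    refine Finset.sum_congr rfl fun i _ => ?_
    have h2 : (inner ℝ W (b i) : ℝ) = a i := by rw [real_inner_comm, ha]
    have h3 : (inner ℝ (b i) W : ℝ) = a i := by rw [ha]
    rw [h2, h3]
    ring
  have h1 : w ⬝ᵥ (B *ᵥ w) = (inner ℝ W (Matrix.toEuclideanLin B W) : ℝ) := by
    rw [hdot]
    congr 1
  have h2 : w ⬝ᵥ w = (inner ℝ W W : ℝ) := by rw [hdot]; rfl
  rw [h1, h2, hWT, hWW, Finset.mul_sum]
  exact Finset.sum_le_sum fun i _ =>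
    mul_le_mul_of_nonneg_right (hev i) (sq_nonneg _)

lemma row_sq_sum_le {n p : ℕ} (A : Matrix (Fin n) (Fin p) ℝ) (hH : (Aᵀ * A).IsHermitian)
    {β : ℝ} (hβ : 0 < β) (hev : ∀ i, β ≤ hH.eigenvalues i) (j : Fin p) :
    ∑ i, ((Aᵀ * A)⁻¹ * Aᵀ) j i ^ 2 ≤ β⁻¹ := by
  classical
  have hBsymm : (Aᵀ * A)ᵀ = Aᵀ * A := by
    rw [Matrix.transpose_mul, Matrix.transpose_transpose]
  have hdet : IsUnit (Aᵀ * A).det := by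
    rw [isUnit_iff_ne_zero]
    have hd : (Aᵀ * A).det = ∏ i, hH.eigenvalues i := by
      have := hH.det_eq_prod_eigenvalues
      simpa using this
    rw [hd]
    exact ne_of_gt (Finset.prod_pos fun i _ => lt_of_lt_of_le hβ (hev i))
  set w : Fin p → ℝ := (Aᵀ * A)⁻¹ *ᵥ Pi.single j 1 with hw
  have hBw : (Aᵀ * A) *ᵥ w = Pi.single j 1 := by
    rw [hw, Matrix.mulVec_mulVec, Matrix.mul_nonsing_inv _ hdet, Matrix.one_mulVec]
  have hrow : ∀ i, ((Aᵀ * A)⁻¹ * Aᵀ) j i = (A *ᵥ w) i := by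
    intro i
    rw [Matrix.mul_apply, Matrix.mulVec]
    simp only [dotProduct]
    refine Finset.sum_congr rfl fun k _ => ?_
    have hwk : w k = (Aᵀ * A)⁻¹ k j := by
      rw [hw]
      simp [Matrix.mulVec_single]
    have hsym : (Aᵀ * A)⁻¹ j k = (Aᵀ * A)⁻¹ k j := by
      have hT : ((Aᵀ * A)⁻¹)ᵀ = (Aᵀ * A)⁻¹ := by
        rw [Matrix.transpose_nonsing_inv, hBsymm]
      conv_lhs => rw [← hT]
      rfl
    rw [hwk, Matrix.transpose_apply, hsym]
    try ring
  have hsum : ∑ i, (((Aᵀ * A)⁻¹ * Aᵀ) j i) ^ 2 = w ⬝ᵥ ((Aᵀ * A) *ᵥ w) := by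
    have h1 : ∑ i, (((Aᵀ * A)⁻¹ * Aᵀ) j i) ^ 2 = (A *ᵥ w) ⬝ᵥ (A *ᵥ w) := by
      rw [dotProduct]
      exact Finset.sum_congr rfl fun i _ => by rw [hrow i]; ring
    rw [h1, dotProduct_mulVec, ← Matrix.mulVec_transpose, Matrix.mulVec_mulVec,
      dotProduct_comm]
  have hq : β * (w ⬝ᵥ w) ≤ w ⬝ᵥ ((Aᵀ * A) *ᵥ w) := quad_form_ge hH hev w
  have hwj : w ⬝ᵥ ((Aᵀ * A) *ᵥ w) = w j := by
    rw [hBw, dotProduct]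
    simp [Pi.single_apply]
  set R : ℝ := ∑ i, (((Aᵀ * A)⁻¹ * Aᵀ) j i) ^ 2 with hR
  have hR0 : 0 ≤ R := Finset.sum_nonneg fun i _ => sq_nonneg _
  have hRwj : R = w j := hsum.trans hwj
  have hwjsq : (w j) ^ 2 ≤ w ⬝ᵥ w := by
    rw [dotProduct, sq]
    exact Finset.single_le_sum (f := fun k => w k * w k)
      (fun k _ => mul_self_nonneg _) (Finset.mem_univ j)
  have key : β * R ^ 2 ≤ R := by
    calc β * R ^ 2 = β * (w j) ^ 2 := by rw [hRwj]
      _ ≤ β * (w ⬝ᵥ w) := mul_le_mul_of_nonneg_left hwjsq hβ.le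
      _ ≤ w ⬝ᵥ ((Aᵀ * A) *ᵥ w) := hq
      _ = R := by rw [hwj, hRwj]
  by_contra hcon
  push_neg at hcon
  have hRpos : 0 < R := lt_trans (by positivity) hcon
  have h1 : 1 < β * R := by
    rw [← mul_inv_cancel₀ hβ.ne']
    exact mul_lt_mul_of_pos_left hcon hβ
  nlinarith [mul_lt_mul_of_pos_right h1 hRpos]


lemma gronwall_traj {d p : ℕ} (Θ : EuclideanSpace ℝ (Fin d) → Matrix (Fin d) (Fin p) ℝ)
    {K : ℝ} (hK : ∀ (z : EuclideanSpace ℝ (Fin d)) (v : EuclideanSpace ℝ (Fin p)),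
      ‖Matrix.toEuclideanLin (Θ z) v‖ ≤ K * ‖v‖)
    {L T : ℝ} (hL : 0 < L) (hT : 0 ≤ T)
    (ξ1 ξ2 : EuclideanSpace ℝ (Fin p))
    (x y : ℝ → EuclideanSpace ℝ (Fin d)) (h0 : x 0 = y 0)
    (hx : ∀ t ∈ Icc (0:ℝ) T, HasDerivAt x (Matrix.toEuclideanLin (Θ (x t)) ξ1) t)
    (hy : ∀ t ∈ Icc (0:ℝ) T, HasDerivAt y (Matrix.toEuclideanLin (Θ (y t)) ξ2) t)
    (hlip : LipschitzWith L.toNNReal (fun z => Matrix.toEuclideanLin (Θ z) ξ2)) :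
    ‖x T - y T‖ ≤ K * ‖ξ1 - ξ2‖ / L * (Real.exp (L * T) - 1) := by
  have hTmem : T ∈ Icc (0:ℝ) T := ⟨hT, le_refl T⟩
  have key := dist_le_of_approx_trajectories_ODE
    (v := fun _ z => Matrix.toEuclideanLin (Θ z) ξ2) (K := L.toNNReal)
    (f := x) (f' := fun t => Matrix.toEuclideanLin (Θ (x t)) ξ1)
    (g := y) (g' := fun t => Matrix.toEuclideanLin (Θ (y t)) ξ2)
    (a := 0) (b := T) (εf := K * ‖ξ1 - ξ2‖) (εg := 0) (δ := 0)
    (fun _ => hlip)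
    (fun t ht => (hx t ht).continuousAt.continuousWithinAt)
    (fun t ht => (hx t (Ico_subset_Icc_self ht)).hasDerivWithinAt)
    (fun t ht => by
      rw [dist_eq_norm, ← map_sub (Matrix.toEuclideanLin (Θ (x t))) ξ1 ξ2]
      exact hK _ _)
    (fun t ht => (hy t ht).continuousAt.continuousWithinAt)
    (fun t ht => (hy t (Ico_subset_Icc_self ht)).hasDerivWithinAt)
    (fun t ht => by rw [dist_self])
    (by rw [h0, dist_self])
    T hTmem
  rw [← dist_eq_norm]
  have hcoe : ((L.toNNReal : ℝ≥0) : ℝ) = L := Real.coe_toNNReal L hL.le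
  rw [gronwallBound_of_K_ne_0 (by rw [hcoe]; exact hL.ne')] at key
  rw [hcoe] at key
  calc dist (x T) (y T)
      ≤ 0 * Real.exp (L * (T - 0)) + (K * ‖ξ1 - ξ2‖ + 0) / L * (Real.exp (L * (T - 0)) - 1) := key
    _ = K * ‖ξ1 - ξ2‖ / L * (Real.exp (L * T) - 1) := by rw [sub_zero]; ring


end auxiliary

open scoped ENNReal

set_option maxHeartbeats 2000000 in
theorem stmt_7 :
    ∃ C : ℝ, 0 < C ∧
      ∀ (d n p : ℕ), 1 ≤ n → 1 ≤ p →
      ∀ (Θ : EuclideanSpace ℝ (Fin d) → Matrix (Fin d) (Fin p) ℝ), Continuous Θ →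
      ∀ (K : ℝ), (∀ (z : EuclideanSpace ℝ (Fin d)) (v : EuclideanSpace ℝ (Fin p)),
        ‖Matrix.toEuclideanLin (Θ z) v‖ ≤ K * ‖v‖) →
      ∀ (A : Matrix (Fin n) (Fin p) ℝ) (hH : (Aᵀ * A).IsHermitian)
        (c : ℝ), 0 < c → (∀ i, c * n ≤ hH.eigenvalues i) →
      ∀ (Ω : Type) (_ : MeasurableSpace Ω) (μ : Measure Ω), IsProbabilityMeasure μ →
      ∀ (ε : Ω → Fin n → ℝ), (∀ i, Measurable fun ω => ε ω i) →
      ∀ (s : ℝ), 0 < s →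
      iIndepFun (fun i ω => ε ω i) μ →
      (∀ i, Measure.map (fun ω => ε ω i) μ = gaussianReal 0 (Real.toNNReal (s ^ 2))) →
      ∀ (ξstar : Fin p → ℝ) (ξhat : Ω → Fin p → ℝ),
      (∀ ω, ξhat ω = ((Aᵀ * A)⁻¹ * Aᵀ).mulVec (A.mulVec ξstar + ε ω)) →
      ∀ (L : ℝ), 0 < L → ∀ (T : ℝ), 0 ≤ T →
      ∀ (x0 : EuclideanSpace ℝ (Fin d)) (x : ℝ → EuclideanSpace ℝ (Fin d)), x 0 = x0 →
      (∀ t ∈ Set.Icc (0:ℝ) T, HasDerivAt x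
        (Matrix.toEuclideanLin (Θ (x t)) ((EuclideanSpace.equiv (Fin p) ℝ).symm ξstar)) t) →
      ∀ (xhat : Ω → ℝ → EuclideanSpace ℝ (Fin d)), (∀ ω, xhat ω 0 = x0) →
      (∀ᵐ ω ∂μ,
        (∀ t ∈ Set.Icc (0:ℝ) T, HasDerivAt (xhat ω)
          (Matrix.toEuclideanLin (Θ (xhat ω t))
            ((EuclideanSpace.equiv (Fin p) ℝ).symm (ξhat ω))) t) ∧
        LipschitzWith L.toNNReal
          (fun z => Matrix.toEuclideanLin (Θ z) ((EuclideanSpace.equiv (Fin p) ℝ).symm (ξhat ω)))) →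
      ∀ δ : ℝ, δ ∈ Set.Ioc (0:ℝ) (1/2) →
      ENNReal.ofReal (1 - δ) ≤
        μ {ω | ‖x T - xhat ω T‖
          ≤ C * (K / L) * (Real.exp (L * T) - 1) * s
            * Real.sqrt (p * Real.log (1 / δ) / (c * n))} := by
  refine ⟨4, by norm_num, ?_⟩
  intro d n p hn hp Θ hΘ K hK A hH c hc hev Ω mΩ μ hμ ε hεmeas s hs hindep hmap
    ξstar ξhat hξhat L hL T hT x0 x hx0 hxode xhat hxhat0 hae δ hδ
  haveI := hμ
  obtain ⟨hδ0, hδhalf⟩ := hδ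
  have hpR : (0:ℝ) < p := by exact_mod_cast hp
  have hnR : (0:ℝ) < n := by exact_mod_cast hn
  have hcn : 0 < c * n := mul_pos hc hnR
  set v : ℝ≥0 := Real.toNNReal (s ^ 2) with hvdef
  have hv : (v : ℝ) = s ^ 2 := Real.coe_toNNReal _ (sq_nonneg s)
  set M : Matrix (Fin p) (Fin n) ℝ := (Aᵀ * A)⁻¹ * Aᵀ with hMdef
  set V : ℝ := s ^ 2 / (c * n) with hVdef
  have hV : 0 < V := div_pos (by positivity) hcn
  -- row bound
  have hrow : ∀ j, (∑ i, M j i ^ 2) * (v : ℝ) ≤ V := by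
    intro j
    rw [hv]
    have h1 := row_sq_sum_le A hH hcn hev j
    calc (∑ i, M j i ^ 2) * s ^ 2 ≤ (c * n)⁻¹ * s ^ 2 :=
          mul_le_mul_of_nonneg_right h1 (sq_nonneg s)
      _ = V := by rw [hVdef]; field_simp
  -- coordinates of the error vector
  set Xc : Fin p → Ω → ℝ := fun j ω => ∑ i, M j i * ε ω i with hXcdef
  have hXcmeas : ∀ j, Measurable (Xc j) :=
    fun j => Finset.measurable_sum _ (fun i _ => (hεmeas i).const_mul _)
  -- invertibility
  have hdet : IsUnit (Aᵀ * A).det := by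
    rw [isUnit_iff_ne_zero]
    have hd : (Aᵀ * A).det = ∏ i, hH.eigenvalues i := by
      have := hH.det_eq_prod_eigenvalues
      simpa using this
    rw [hd]
    exact ne_of_gt (Finset.prod_pos fun i _ => lt_of_lt_of_le hcn (hev i))
  have hdiff : ∀ ω j, ξhat ω j - ξstar j = Xc j ω := by
    intro ω j
    have hMA : M * A = 1 := by
      rw [hMdef, Matrix.mul_assoc, Matrix.nonsing_inv_mul _ hdet]
    rw [hξhat ω, Matrix.mulVec_add, Matrix.mulVec_mulVec, hMA, Matrix.one_mulVec]
    simp [hXcdef, Matrix.mulVec, dotProduct]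
  set Y : Ω → ℝ := fun ω => ∑ j, Xc j ω ^ 2 with hYdef
  have hYmeas : Measurable Y :=
    Finset.measurable_sum _ (fun j _ => (hXcmeas j).pow_const 2)
  -- tails of coordinates
  have htail : ∀ j, ∀ u : ℝ, 0 < u →
      μ {ω | u ≤ Xc j ω ^ 2} ≤ 2 * ENNReal.ofReal (Real.exp (-u / (2 * V))) := by
    intro j u hu
    have hsq : Real.sqrt u ^ 2 = u := Real.sq_sqrt hu.le
    have h1 := tail_weighted_sum hεmeas hmap hindep (fun i => M j i) hV (hrow j)
      (Real.sqrt_nonneg u)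
    have hm2 : (∑ i, (-(M j i)) ^ 2) * (v : ℝ) ≤ V := by
      simpa [neg_sq] using hrow j
    have h2 := tail_weighted_sum hεmeas hmap hindep (fun i => -(M j i)) hV hm2
      (Real.sqrt_nonneg u)
    have hneg : {ω | Real.sqrt u ≤ ∑ i, -(M j i) * ε ω i}
        = {ω | Real.sqrt u ≤ -(Xc j ω)} := by
      ext ω
      simp [hXcdef, Finset.sum_neg_distrib, neg_mul]
    rw [hneg] at h2
    have hsub : {ω | u ≤ Xc j ω ^ 2}
        ⊆ {ω | Real.sqrt u ≤ Xc j ω} ∪ {ω | Real.sqrt u ≤ -(Xc j ω)} := by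
      intro ω hω
      simp only [Set.mem_setOf_eq] at hω
      have habs : Real.sqrt u ≤ |Xc j ω| := by
        rw [← Real.sqrt_sq_eq_abs]
        exact Real.sqrt_le_sqrt hω
      simp only [Set.mem_union, Set.mem_setOf_eq]
      rcases abs_cases (Xc j ω) with ⟨he, _⟩ | ⟨he, _⟩
      · left; rwa [he] at habs
      · right; rwa [he] at habs
    calc μ {ω | u ≤ Xc j ω ^ 2}
        ≤ μ ({ω | Real.sqrt u ≤ Xc j ω} ∪ {ω | Real.sqrt u ≤ -(Xc j ω)}) := measure_mono hsub
      _ ≤ μ {ω | Real.sqrt u ≤ Xc j ω} + μ {ω | Real.sqrt u ≤ -(Xc j ω)} := measure_union_le _ _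
      _ ≤ ENNReal.ofReal (Real.exp (-(Real.sqrt u) ^ 2 / (2 * V)))
            + ENNReal.ofReal (Real.exp (-(Real.sqrt u) ^ 2 / (2 * V))) := by
          refine add_le_add ?_ ?_
          · simpa [hXcdef] using h1
          · exact h2
      _ = 2 * ENNReal.ofReal (Real.exp (-u / (2 * V))) := by
          rw [hsq]
          exact (two_mul _).symm
  -- moment bounds
  have hmom : ∀ j, ∫⁻ ω, ENNReal.ofReal (Real.exp ((4 * V)⁻¹ * Xc j ω ^ 2)) ∂μ ≤ 3 :=
    fun j => lintegral_exp_sq_le (hXcmeas j) hV (htail j)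
  set r : ℝ := (4 * V)⁻¹ with hrdef
  have hr : 0 < r := by positivity
  set lam : ℝ := r / p with hlamdef
  have hlam : 0 < lam := div_pos hr hpR
  -- Jensen
  have hjensen : ∀ ω, Real.exp (lam * Y ω)
      ≤ ∑ j, (1 / (p:ℝ)) * Real.exp (r * Xc j ω ^ 2) := by
    intro ω
    have hsum1 : ∑ _j : Fin p, (1 / (p:ℝ)) = 1 := by
      rw [Finset.sum_const, Finset.card_univ, Fintype.card_fin, nsmul_eq_mul]
      field_simp
    have h := convexOn_exp.map_sum_le (t := Finset.univ) (w := fun _ : Fin p => 1 / (p:ℝ))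
      (p := fun j => r * Xc j ω ^ 2) (fun _ _ => by positivity) hsum1
      (fun _ _ => Set.mem_univ _)
    have harg : lam * Y ω = ∑ j, (1 / (p:ℝ)) • (r * Xc j ω ^ 2) := by
      rw [hYdef]
      simp only [smul_eq_mul]
      rw [Finset.mul_sum]
      exact Finset.sum_congr rfl fun j _ => by rw [hlamdef]; ring
    rw [harg]
    simpa [smul_eq_mul] using h
  -- expectation bound
  have hEY : ∫⁻ ω, ENNReal.ofReal (Real.exp (lam * Y ω)) ∂μ ≤ 3 := by
    have hp0 : (p : ℝ) ≠ 0 := ne_of_gt hpR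
    calc ∫⁻ ω, ENNReal.ofReal (Real.exp (lam * Y ω)) ∂μ
        ≤ ∫⁻ ω, ENNReal.ofReal (∑ j, (1 / (p:ℝ)) * Real.exp (r * Xc j ω ^ 2)) ∂μ :=
          lintegral_mono fun ω => ENNReal.ofReal_le_ofReal (hjensen ω)
      _ = ∫⁻ ω, ∑ j, ENNReal.ofReal ((1 / (p:ℝ)) * Real.exp (r * Xc j ω ^ 2)) ∂μ := by
          refine lintegral_congr fun ω => ?_
          exact ENNReal.ofReal_sum_of_nonneg fun j _ => by positivity
      _ = ∑ j, ∫⁻ ω, ENNReal.ofReal ((1 / (p:ℝ)) * Real.exp (r * Xc j ω ^ 2)) ∂μ := by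
          refine lintegral_finset_sum _ fun j _ => ?_
          exact ((((hXcmeas j).pow_const 2).const_mul r).exp.const_mul _).ennreal_ofReal
      _ = ∑ j, ENNReal.ofReal (1 / (p:ℝ))
            * ∫⁻ ω, ENNReal.ofReal (Real.exp (r * Xc j ω ^ 2)) ∂μ := by
          refine Finset.sum_congr rfl fun j _ => ?_
          rw [← lintegral_const_mul' _ _ ENNReal.ofReal_ne_top]
          exact lintegral_congr fun ω => by
            rw [← ENNReal.ofReal_mul (by positivity)]
      _ ≤ ∑ _j : Fin p, ENNReal.ofReal (1 / (p:ℝ)) * 3 := by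
          refine Finset.sum_le_sum fun j _ => ?_
          exact mul_le_mul_right (by rw [hrdef] at *; exact hmom j) _
      _ = 3 := by
          rw [Finset.sum_const, Finset.card_univ, Fintype.card_fin, nsmul_eq_mul,
            ← mul_assoc, ← ENNReal.ofReal_natCast p, ← ENNReal.ofReal_mul (by positivity)]
          rw [mul_one_div_cancel hp0, ENNReal.ofReal_one, one_mul]
  -- Chernoff
  have hlog : 0 < Real.log (1 / δ) :=
    Real.log_pos (by rw [lt_div_iff₀ hδ0]; linarith)
  set a : ℝ := 16 * V * (p * Real.log (1 / δ)) with hadef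
  have ha : 0 < a := by positivity
  have hlam_a : lam * a = 4 * Real.log (1 / δ) := by
    rw [hlamdef, hrdef, hadef]
    have h4V : (4 : ℝ) * V ≠ 0 := by positivity
    field_simp
    ring
  set Bad : Set Ω := {ω | a ≤ Y ω} with hBaddef
  have hchern : μ Bad ≤ ENNReal.ofReal (Real.exp (-(lam * a))) * 3 := by
    have hmono : ∀ ω ∈ Bad, (1:ℝ≥0∞) ≤ ENNReal.ofReal (Real.exp (lam * (Y ω - a))) := by
      intro ω hω
      rw [← ENNReal.ofReal_one]
      apply ENNReal.ofReal_le_ofReal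
      rw [← Real.exp_zero]
      apply Real.exp_le_exp.2
      have : a ≤ Y ω := hω
      nlinarith
    have hmeasfun : Measurable fun ω => ENNReal.ofReal (Real.exp (lam * (Y ω - a))) :=
      (((hYmeas.sub_const a).const_mul lam).exp).ennreal_ofReal
    calc μ Bad = ∫⁻ _ω in Bad, 1 ∂μ := (setLIntegral_one Bad).symm
      _ ≤ ∫⁻ ω in Bad, ENNReal.ofReal (Real.exp (lam * (Y ω - a))) ∂μ :=
          setLIntegral_mono hmeasfun hmono
      _ ≤ ∫⁻ ω, ENNReal.ofReal (Real.exp (lam * (Y ω - a))) ∂μ :=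
          setLIntegral_le_lintegral _ _
      _ = ENNReal.ofReal (Real.exp (-(lam * a))) * ∫⁻ ω, ENNReal.ofReal (Real.exp (lam * Y ω)) ∂μ := by
          rw [← lintegral_const_mul' _ _ ENNReal.ofReal_ne_top]
          refine lintegral_congr fun ω => ?_
          rw [← ENNReal.ofReal_mul (Real.exp_nonneg _), ← Real.exp_add]
          congr 2
          ring
      _ ≤ ENNReal.ofReal (Real.exp (-(lam * a))) * 3 := mul_le_mul_right hEY _
  have hbad : μ Bad ≤ ENNReal.ofReal δ := by
    have hexp : Real.exp (-(lam * a)) = δ ^ 4 := by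
      rw [hlam_a]
      have : -(4 * Real.log (1 / δ)) = (4:ℕ) * Real.log δ := by
        rw [one_div, Real.log_inv]
        push_cast
        ring
      rw [this, Real.exp_nat_mul, Real.exp_log hδ0]
    have h3d : (3:ℝ) * δ ^ 4 ≤ δ := by
      have h3 : δ ^ 3 ≤ (1/2:ℝ) ^ 3 := pow_le_pow_left₀ hδ0.le hδhalf 3
      have h4 : δ * δ ^ 3 ≤ δ * (1/2:ℝ) ^ 3 := mul_le_mul_of_nonneg_left h3 hδ0.le
      nlinarith [h4]
    calc μ Bad ≤ ENNReal.ofReal (Real.exp (-(lam * a))) * 3 := hchern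
      _ = ENNReal.ofReal (3 * δ ^ 4) := by
          rw [hexp, ENNReal.ofReal_mul (by positivity), mul_comm]
          norm_num
      _ ≤ ENNReal.ofReal δ := ENNReal.ofReal_le_ofReal h3d
  -- nonnegativity facts
  have hKnn : 0 ≤ K := by
    have h0 := hK 0 (EuclideanSpace.single ⟨0, hp⟩ 1)
    rw [EuclideanSpace.norm_single] at h0
    have := norm_nonneg (Matrix.toEuclideanLin (Θ 0) (EuclideanSpace.single ⟨0, hp⟩ 1))
    simpa using le_trans this h0
  have hE1 : 0 ≤ Real.exp (L * T) - 1 := by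
    have : (1:ℝ) ≤ Real.exp (L * T) := Real.one_le_exp (by positivity)
    linarith
  -- sqrt computation
  have hsqa : Real.sqrt a = 4 * s * Real.sqrt ((p:ℝ) * Real.log (1 / δ) / (c * n)) := by
    have haeq : a = (4 * s) ^ 2 * ((p:ℝ) * Real.log (1 / δ) / (c * n)) := by
      rw [hadef, hVdef]
      field_simp
      ring
    rw [haeq, Real.sqrt_mul (sq_nonneg _), Real.sqrt_sq (by positivity : (0:ℝ) ≤ 4 * s)]
  -- good event inclusion
  set G : Set Ω := {ω | ‖x T - xhat ω T‖
      ≤ 4 * (K / L) * (Real.exp (L * T) - 1) * s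
        * Real.sqrt ((p:ℝ) * Real.log (1 / δ) / (c * n))} with hGdef
  have hincl : ∀ ω,
      ((∀ t ∈ Set.Icc (0:ℝ) T, HasDerivAt (xhat ω)
        (Matrix.toEuclideanLin (Θ (xhat ω t))
          ((EuclideanSpace.equiv (Fin p) ℝ).symm (ξhat ω))) t) ∧
      LipschitzWith L.toNNReal
        (fun z => Matrix.toEuclideanLin (Θ z) ((EuclideanSpace.equiv (Fin p) ℝ).symm (ξhat ω))))
      → ω ∉ Bad → ω ∈ G := by
    intro ω hQ hωB
    set ξ1 : EuclideanSpace ℝ (Fin p) := (EuclideanSpace.equiv (Fin p) ℝ).symm ξstar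
    set ξ2 : EuclideanSpace ℝ (Fin p) := (EuclideanSpace.equiv (Fin p) ℝ).symm (ξhat ω)
    have hgron := gronwall_traj Θ hK hL hT ξ1 ξ2 x (xhat ω)
      (by rw [hx0, hxhat0 ω]) hxode hQ.1 hQ.2
    have hD2 : ‖ξ1 - ξ2‖ = Real.sqrt (Y ω) := by
      rw [EuclideanSpace.norm_eq]
      congr 1
      refine Finset.sum_congr rfl fun j _ => ?_
      have hco : (ξ1 - ξ2) j = ξstar j - ξhat ω j := rfl
      rw [hco, Real.norm_eq_abs, sq_abs, ← hdiff ω j]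
      ring
    have hna : ¬ a ≤ Y ω := hωB
    have hYa : Y ω ≤ a := le_of_lt (lt_of_not_ge hna)
    have hDa : ‖ξ1 - ξ2‖ ≤ Real.sqrt a := by
      rw [hD2]
      exact Real.sqrt_le_sqrt hYa
    have hbound : K * ‖ξ1 - ξ2‖ / L * (Real.exp (L * T) - 1)
        ≤ 4 * (K / L) * (Real.exp (L * T) - 1) * s
          * Real.sqrt ((p:ℝ) * Real.log (1 / δ) / (c * n)) := by
      have h1 : K * ‖ξ1 - ξ2‖ ≤ K * Real.sqrt a := mul_le_mul_of_nonneg_left hDa hKnn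
      have h2 : K * ‖ξ1 - ξ2‖ / L ≤ K * Real.sqrt a / L := (div_le_div_iff_of_pos_right hL).2 h1
      have hstep : K * ‖ξ1 - ξ2‖ / L * (Real.exp (L * T) - 1)
          ≤ K * Real.sqrt a / L * (Real.exp (L * T) - 1) :=
        mul_le_mul_of_nonneg_right h2 hE1
      refine hstep.trans (le_of_eq ?_)
      rw [hsqa]
      ring
    exact le_trans hgron hbound
  -- measure bookkeeping
  have hGc : μ Gᶜ ≤ ENNReal.ofReal δ := by
    have hmble : μ Gᶜ ≤ μ Bad := by
      apply measure_mono_ae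
      filter_upwards [hae] with ω hQ
      intro hωGc
      by_contra hb
      exact hωGc (hincl ω hQ hb)
    exact hmble.trans hbad
  have huniv : (1:ℝ≥0∞) ≤ μ G + ENNReal.ofReal δ := by
    calc (1:ℝ≥0∞) = μ Set.univ := (measure_univ).symm
      _ = μ (G ∪ Gᶜ) := by rw [Set.union_compl_self]
      _ ≤ μ G + μ Gᶜ := measure_union_le _ _
      _ ≤ μ G + ENNReal.ofReal δ := add_le_add_right hGc _
  have hkey : ENNReal.ofReal (1 - δ) + ENNReal.ofReal δ ≤ μ G + ENNReal.ofReal δ := by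
    refine le_trans ?_ huniv
    rw [← ENNReal.ofReal_add (by linarith) hδ0.le]
    rw [show 1 - δ + δ = 1 by ring, ENNReal.ofReal_one]
  exact (ENNReal.add_le_add_iff_right ENNReal.ofReal_ne_top).1 hkey

end S7
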